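/- arXiv:1909.10586 — 4 statements merged into one kernel-verified Lean document; each statement's English description precedes it below -/
import Mathlib

section
/- Let g, h : F_2^n → F_2 and define f : F_2^m × F_2^n → F_2 by f(y,x) = g(x) if y = (1,...,1) and h(x) otherwise. Then the nonlinearity satisfies N(f) ≥ (2^m − 1)·N(h) + N(g). -/
open Finset

/-- Hamming weight: number of inputs where `f` takes value 1. -/
def wt {α : Type*} [Fintype α] (f : α → ZMod 2) : ℕ :=
  (Finset.univ.filter fun x => f x = 1).card

/-- Fourier coefficient `𝓕(f) = ∑ x, (-1)^{f x}`. -/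
def Fcal {α : Type*} [Fintype α] (f : α → ZMod 2) : ℤ :=
  ∑ x, (-1 : ℤ) ^ (f x).val

/-- `f` is balanced: its weight is half the domain size. -/
def IsBalanced {α : Type*} [Fintype α] (f : α → ZMod 2) : Prop :=
  2 * wt f = Fintype.card α

/-- Dot product over `F_2`. -/
def dotp {n : ℕ} (a x : Fin n → ZMod 2) : ZMod 2 := ∑ i, a i * x i

/-- Walsh transform of `f` at `a`. -/
def walsh {n : ℕ} (f : (Fin n → ZMod 2) → ZMod 2) (a : Fin n → ZMod 2) : ℤ :=
  ∑ x, (-1 : ℤ) ^ (f x + dotp a x).val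

/-- First-order derivative `D_a f`. -/
def Dd {n : ℕ} (a : Fin n → ZMod 2) (f : (Fin n → ZMod 2) → ZMod 2) :
    (Fin n → ZMod 2) → ZMod 2 := fun x => f (x + a) + f x

/-- Second-order derivative `D_b D_a f`. -/
def DD {n : ℕ} (b a : Fin n → ZMod 2) (f : (Fin n → ZMod 2) → ZMod 2) :
    (Fin n → ZMod 2) → ZMod 2 :=
  fun x => f x + f (x + b) + f (x + a) + f (x + a + b)

/-- `M_a(f) = |Z_a(f)| - |U_a(f)|`. -/
def Mcal {n : ℕ} (a : Fin n → ZMod 2) (f : (Fin n → ZMod 2) → ZMod 2) : ℤ :=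
  ((Finset.univ.filter fun b : Fin n → ZMod 2 => ∀ x, DD b a f x = 0).card : ℤ) -
    ((Finset.univ.filter fun b : Fin n → ZMod 2 => ∀ x, DD b a f x = 1).card : ℤ)

/-- `f` has algebraic degree at most `d` (all ANF coefficients of monomials of
degree `> d` vanish). -/
def degLe {n : ℕ} (f : (Fin n → ZMod 2) → ZMod 2) (d : ℕ) : Prop :=
  ∀ S : Finset (Fin n), d < S.card →
    ∑ x ∈ Finset.univ.filter (fun x : Fin n → ZMod 2 => ∀ i, x i = 1 → i ∈ S), f x = 0

/-- Nonlinearity: minimal Hamming distance to an affine function. -/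
noncomputable def nonlin {n : ℕ} (f : (Fin n → ZMod 2) → ZMod 2) : ℕ :=
  sInf { d | ∃ (v : Fin n → ZMod 2) (c : ZMod 2), d = wt (fun x => f x + dotp v x + c) }

/-- Component function `F_λ = λ · F`. -/
def compF {n : ℕ} (F : (Fin n → ZMod 2) → (Fin n → ZMod 2)) (lam : Fin n → ZMod 2) :
    (Fin n → ZMod 2) → ZMod 2 := fun x => dotp lam (F x)

/-- `F` is almost perfect nonlinear. -/
def IsAPN {n : ℕ} (F : (Fin n → ZMod 2) → (Fin n → ZMod 2)) : Prop :=
  ∀ a : Fin n → ZMod 2, a ≠ 0 → ∀ b : Fin n → ZMod 2,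
    (Finset.univ.filter fun x => F (x + a) + F x = b).card ≤ 2

/-- Fourth power moment of the Walsh transform. -/
def L4 {n : ℕ} (F : (Fin n → ZMod 2) → (Fin n → ZMod 2)) : ℤ :=
  ∑ lam ∈ Finset.univ.filter (fun lam : Fin n → ZMod 2 => lam ≠ 0),
    ∑ a, (walsh (compF F lam) a) ^ 4

/-- Nonlinearity of a Boolean function on the product domain
`F_2^m × F_2^n ≅ F_2^{m+n}`. -/
noncomputable def nonlinP {m n : ℕ} (f : (Fin m → ZMod 2) × (Fin n → ZMod 2) → ZMod 2) : ℕ :=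
  sInf { d | ∃ (a : Fin m → ZMod 2) (b : Fin n → ZMod 2) (c : ZMod 2),
    d = wt (fun p : (Fin m → ZMod 2) × (Fin n → ZMod 2) =>
      f p + dotp a p.1 + dotp b p.2 + c) }

lemma wt_prod {α β : Type*} [Fintype α] [Fintype β] (F : α × β → ZMod 2) :
    wt F = ∑ y : α, wt (fun x => F (y, x)) := by
  simp only [wt, Finset.card_filter, Fintype.sum_prod_type]

lemma nonlin_le {n : ℕ} (h : (Fin n → ZMod 2) → ZMod 2) (b : Fin n → ZMod 2) (c : ZMod 2) :
    nonlin h ≤ wt (fun x => h x + dotp b x + c) :=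
  Nat.sInf_le ⟨b, c, rfl⟩

theorem stmt8 (m n : ℕ) (g h : (Fin n → ZMod 2) → ZMod 2)
    (f : (Fin m → ZMod 2) × (Fin n → ZMod 2) → ZMod 2)
    (hf : ∀ y x, f (y, x) = if y = (fun _ => 1) then g x else h x) :
    nonlinP f ≥ (2 ^ m - 1) * nonlin h + nonlin g := by
  apply le_csInf
  · exact ⟨_, 0, 0, 0, rfl⟩
  rintro d ⟨a, b, c, rfl⟩
  rw [wt_prod]
  dsimp only
  set ones : Fin m → ZMod 2 := fun _ => 1 with hones
  have hterm : ∀ y : Fin m → ZMod 2,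
      wt (fun x => f (y, x) + dotp a y + dotp b x + c)
        = wt (fun x => (if y = ones then g x else h x) + dotp b x + (dotp a y + c)) := by
    intro y
    congr 1
    funext x
    rw [hf]
    ring
  rw [← Finset.add_sum_erase Finset.univ _ (Finset.mem_univ ones)]
  have h1 : nonlin g ≤ wt (fun x => f (ones, x) + dotp a ones + dotp b x + c) := by
    rw [hterm]
    simp only [if_pos rfl]
    exact nonlin_le g b _
  have h2 : (2 ^ m - 1) * nonlin h ≤
      ∑ y ∈ Finset.univ.erase ones, wt (fun x => f (y, x) + dotp a y + dotp b x + c) := by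
    have hcard : (Finset.univ.erase ones).card = 2 ^ m - 1 := by
      rw [Finset.card_erase_of_mem (Finset.mem_univ _), Finset.card_univ]
      simp [Fintype.card_fun]
    calc (2 ^ m - 1) * nonlin h = (Finset.univ.erase ones).card • nonlin h := by
          rw [hcard, smul_eq_mul]
      _ ≤ _ := Finset.card_nsmul_le_sum _ _ _ (by
          intro y hy
          rw [hterm]
          simp only [if_neg (Finset.ne_of_mem_erase hy)]
          exact nonlin_le h b _)
  omega
end

section
/- Let n = mk with m ≥ 2 and let f : (F_2^m)^k → F_2 be f(y_0,...,y_{k-1}) = Σ_{i=0}^{k-1} Π_{j=1}^m (y_i)_j. Then the nonlinearity of f equals 2^{n−1} − (2^m − 2)^k / 2. -/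
open Finset

/-- Nonlinearity of a Boolean function on the domain `(F_2^m)^k ≅ F_2^{mk}`. -/
noncomputable def nonlinB {m k : ℕ} (f : (Fin k → Fin m → ZMod 2) → ZMod 2) : ℕ :=
  sInf { d | ∃ (a : Fin k → Fin m → ZMod 2) (c : ZMod 2),
    d = wt (fun Y : Fin k → Fin m → ZMod 2 => f Y + (∑ i, ∑ j, a i j * Y i j) + c) }


def chi (u : ZMod 2) : ℤ := (-1) ^ u.val

lemma chi_add' : ∀ u v : ZMod 2, chi (u + v) = chi u * chi v := by decide

lemma chi_zero : chi 0 = 1 := rfl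

lemma chi_abs : ∀ c : ZMod 2, |chi c| = 1 := by decide

lemma zmod2_eq_zero : ∀ c : ZMod 2, c ≠ 1 → c = 0 := by decide

lemma chi_sum' {ι : Type*} (s : Finset ι) (f : ι → ZMod 2) :
    chi (∑ i ∈ s, f i) = ∏ i ∈ s, chi (f i) := by
  induction s using Finset.cons_induction with
  | empty => simp [chi]
  | cons a s ha ih => rw [Finset.sum_cons, Finset.prod_cons, chi_add', ih]

lemma sum_chi_linear {m : ℕ} (b : Fin m → ZMod 2) :
    ∑ y : Fin m → ZMod 2, chi (∑ j, b j * y j) = if b = 0 then (2:ℤ)^m else 0 := by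
  have h1 : ∀ y : Fin m → ZMod 2, chi (∑ j, b j * y j) = ∏ j, chi (b j * y j) :=
    fun y => chi_sum' _ _
  simp_rw [h1]
  rw [← Fintype.prod_sum (fun j t => chi (b j * t))]
  have h2 : ∀ c : ZMod 2, (∑ t : ZMod 2, chi (c * t)) = if c = 0 then 2 else 0 := by decide
  simp_rw [h2]
  by_cases hb : b = 0
  · simp [hb]
  · obtain ⟨j, hj⟩ := Function.ne_iff.mp hb
    rw [Finset.prod_eq_zero (Finset.mem_univ j) (by simpa using hj), if_neg hb]

lemma T_eq {m : ℕ} (b : Fin m → ZMod 2) :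
    ∑ y : Fin m → ZMod 2, chi ((∏ j, y j) + ∑ j, b j * y j)
      = (if b = 0 then (2:ℤ)^m else 0) - 2 * chi (∑ j, b j) := by
  have key : ∑ y : Fin m → ZMod 2,
      (chi (∑ j, b j * y j) - chi ((∏ j, y j) + ∑ j, b j * y j)) = 2 * chi (∑ j, b j) := by
    rw [Finset.sum_eq_single_of_mem (fun _ => (1 : ZMod 2)) (Finset.mem_univ _)]
    · have hprod : (∏ j : Fin m, (1 : ZMod 2)) = 1 := by simp
      rw [hprod]
      have hsum : (∑ j, b j * (1:ZMod 2)) = ∑ j, b j := by simp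
      rw [hsum]
      have h1 : chi (1 + ∑ j, b j) = - chi (∑ j, b j) := by
        rw [chi_add']; have : chi 1 = -1 := by decide
        rw [this]; ring
      rw [h1]; ring
    · intro y _ hy
      have : (∏ j, y j) = 0 := by
        obtain ⟨j, hj⟩ := Function.ne_iff.mp hy
        exact Finset.prod_eq_zero (Finset.mem_univ j) (zmod2_eq_zero _ hj)
      rw [this, zero_add, sub_self]
  have hsplit := Finset.sum_sub_distrib (s := (Finset.univ : Finset (Fin m → ZMod 2)))
    (f := fun y => chi (∑ j, b j * y j)) (g := fun y => chi ((∏ j, y j) + ∑ j, b j * y j))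
  rw [hsplit, sum_chi_linear] at key
  linarith

lemma T_zero {m : ℕ} : ∑ y : Fin m → ZMod 2, chi ((∏ j, y j) + ∑ j, (0 : Fin m → ZMod 2) j * y j)
    = (2:ℤ)^m - 2 := by
  rw [T_eq]; simp [chi]

lemma T_bound {m : ℕ} (hm : 2 ≤ m) (b : Fin m → ZMod 2) :
    |∑ y : Fin m → ZMod 2, chi ((∏ j, y j) + ∑ j, b j * y j)| ≤ (2:ℤ)^m - 2 := by
  have h4 : (4:ℤ) ≤ 2^m := by
    calc (4:ℤ) = 2^2 := by norm_num
    _ ≤ 2^m := pow_le_pow_right₀ (by norm_num) hm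
  by_cases hb : b = 0
  · subst hb; rw [T_zero]
    rw [abs_of_nonneg (by linarith)]
  · rw [T_eq, if_neg hb, zero_sub, abs_neg, abs_mul, chi_abs]
    simp; linarith


lemma walsh_prod {m k : ℕ} (a : Fin k → Fin m → ZMod 2) (f : (Fin k → Fin m → ZMod 2) → ZMod 2)
    (hf : ∀ Y, f Y = ∑ i, ∏ j, Y i j) :
    ∑ Y : Fin k → Fin m → ZMod 2, chi (f Y + ∑ i, ∑ j, a i j * Y i j)
      = ∏ i, ∑ y : Fin m → ZMod 2, chi ((∏ j, y j) + ∑ j, a i j * y j) := by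
  have h1 : ∀ Y : Fin k → Fin m → ZMod 2, chi (f Y + ∑ i, ∑ j, a i j * Y i j)
      = ∏ i, chi ((∏ j, Y i j) + ∑ j, a i j * Y i j) := by
    intro Y
    rw [hf, ← Finset.sum_add_distrib, chi_sum']
  simp_rw [h1]
  rw [← Fintype.prod_sum (fun i (y : Fin m → ZMod 2) => chi ((∏ j, y j) + ∑ j, a i j * y j))]

lemma wt_int {α : Type*} [Fintype α] (g : α → ZMod 2) :
    2 * (wt g : ℤ) = Fintype.card α - ∑ x, chi (g x) := by
  have h : ∀ c : ZMod 2, chi c = 1 - 2 * (if c = 1 then (1:ℤ) else 0) := by decide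
  simp_rw [h]
  have hb : ∑ x : α, (if g x = 1 then (1:ℤ) else 0) = (wt g : ℤ) := by
    rw [Finset.sum_boole, wt]
  rw [Finset.sum_sub_distrib, Finset.sum_const, ← Finset.mul_sum, hb, Finset.card_univ]
  push_cast
  ring

theorem stmt9 (m k : ℕ) (hm : 2 ≤ m) (hk : 1 ≤ k)
    (f : (Fin k → Fin m → ZMod 2) → ZMod 2)
    (hf : ∀ Y, f Y = ∑ i, ∏ j, Y i j) :
    2 * (nonlinB f : ℤ) = 2 ^ (m * k) - ((2 : ℤ) ^ m - 2) ^ k := by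
  classical
  set M : ℤ := ((2:ℤ)^m - 2)^k with hM
  have hcard : (Fintype.card (Fin k → Fin m → ZMod 2) : ℤ) = 2 ^ (m * k) := by
    rw [show Fintype.card (Fin k → Fin m → ZMod 2) = 2 ^ (m * k) by
      simp [Fintype.card_fun, pow_mul]]
    push_cast
    ring
  have hwt : ∀ (a : Fin k → Fin m → ZMod 2) (c : ZMod 2),
      2 * (wt (fun Y => f Y + (∑ i, ∑ j, a i j * Y i j) + c) : ℤ)
        = 2 ^ (m * k)
          - chi c * ∏ i, ∑ y : Fin m → ZMod 2, chi ((∏ j, y j) + ∑ j, a i j * y j) := by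
    intro a c
    rw [wt_int, hcard]
    congr 1
    have h1 : ∀ Y : Fin k → Fin m → ZMod 2, chi (f Y + (∑ i, ∑ j, a i j * Y i j) + c)
        = chi c * chi (f Y + ∑ i, ∑ j, a i j * Y i j) := by
      intro Y; rw [chi_add']; ring
    simp_rw [h1]
    rw [← Finset.mul_sum, walsh_prod a f hf]
  have hbound : ∀ (a : Fin k → Fin m → ZMod 2) (c : ZMod 2),
      |chi c * ∏ i, ∑ y : Fin m → ZMod 2, chi ((∏ j, y j) + ∑ j, a i j * y j)| ≤ M := by
    intro a c
    rw [abs_mul, chi_abs, one_mul, Finset.abs_prod]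
    calc ∏ i, |∑ y : Fin m → ZMod 2, chi ((∏ j, y j) + ∑ j, a i j * y j)|
        ≤ ∏ _i : Fin k, ((2:ℤ)^m - 2) :=
          Finset.prod_le_prod (fun i _ => abs_nonneg _) (fun i _ => T_bound hm (a i))
      _ = M := by rw [Finset.prod_const, Finset.card_univ, Fintype.card_fin]
  set N : ℕ := wt (fun Y : Fin k → Fin m → ZMod 2 =>
    f Y + (∑ i, ∑ j, (0 : Fin k → Fin m → ZMod 2) i j * Y i j) + 0) with hNdef
  have hN2 : 2 * (N : ℤ) = 2 ^ (m * k) - M := by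
    rw [hNdef, hwt 0 0]
    have hT0 : ∀ i : Fin k, ∑ y : Fin m → ZMod 2,
        chi ((∏ j, y j) + ∑ j, (0 : Fin k → Fin m → ZMod 2) i j * y j) = (2:ℤ)^m - 2 := by
      intro i
      exact T_zero (m := m)
    rw [Finset.prod_congr rfl (fun i _ => hT0 i), Finset.prod_const, Finset.card_univ,
      Fintype.card_fin, chi_zero, one_mul]
  have hmem : N ∈ { d | ∃ (a : Fin k → Fin m → ZMod 2) (c : ZMod 2),
      d = wt (fun Y : Fin k → Fin m → ZMod 2 =>
        f Y + (∑ i, ∑ j, a i j * Y i j) + c) } := ⟨0, 0, rfl⟩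
  have hlb : ∀ d ∈ { d | ∃ (a : Fin k → Fin m → ZMod 2) (c : ZMod 2),
      d = wt (fun Y : Fin k → Fin m → ZMod 2 =>
        f Y + (∑ i, ∑ j, a i j * Y i j) + c) }, N ≤ d := by
    rintro d ⟨a, c, rfl⟩
    have h1 := hwt a c
    have h2 := hbound a c
    have h3 := (abs_le.mp h2).2
    have : (N : ℤ) ≤ (wt (fun Y : Fin k → Fin m → ZMod 2 =>
        f Y + (∑ i, ∑ j, a i j * Y i j) + c) : ℤ) := by linarith
    exact_mod_cast this
  have hinf : nonlinB f = N := le_antisymm (Nat.sInf_le hmem) (le_csInf ⟨N, hmem⟩ hlb)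
  rw [hinf, hN2]
end

section
/- Let F : F_2^n → F_2^n have algebraic degree 2 or 3. Then M(F) = Σ_{λ≠0} Σ_{b≠0} M_b(F_λ) ≥ 2^n(2^n − 1), and F is APN if and only if equality holds. -/
open Finset

namespace S18
open Finset
variable {n : ℕ}

def e (u : ZMod 2) : ℤ := (-1) ^ u.val

lemma e_add : ∀ u v : ZMod 2, e (u + v) = e u * e v := by decide

lemma e_zero : e 0 = 1 := rfl
lemma e_one : e 1 = -1 := rfl

lemma zmod2_cases : ∀ u : ZMod 2, u = 0 ∨ u = 1 := by decide

lemma zmod2_add11 : ∀ u : ZMod 2, u + 1 + 1 = u := by decide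

lemma zmod2_self : ∀ u : ZMod 2, u + u = 0 := by decide

lemma cardG : Fintype.card (Fin n → ZMod 2) = 2 ^ n := by
  simp [Fintype.card_fun]

lemma dotp_add_right (a x y : Fin n → ZMod 2) : dotp a (x + y) = dotp a x + dotp a y := by
  simp [dotp, mul_add, Finset.sum_add_distrib]

lemma dotp_add_left (a b x : Fin n → ZMod 2) : dotp (a + b) x = dotp a x + dotp b x := by
  simp [dotp, add_mul, Finset.sum_add_distrib]

lemma dotp_comm (a x : Fin n → ZMod 2) : dotp a x = dotp x a := by
  simp [dotp, mul_comm]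

lemma dotp_zero_left (x : Fin n → ZMod 2) : dotp 0 x = 0 := by simp [dotp]

lemma dotp_zero_right (x : Fin n → ZMod 2) : dotp x 0 = 0 := by simp [dotp]

lemma dotp_single (v : Fin n → ZMod 2) (i : Fin n) : dotp v (Pi.single i 1) = v i := by
  rw [dotp, Finset.sum_eq_single i]
  · simp
  · intro j _ hj; simp [Pi.single_apply, hj]
  · simp

lemma sum_e_dotp (v : Fin n → ZMod 2) :
    ∑ lam : Fin n → ZMod 2, e (dotp lam v) = if v = 0 then 2 ^ n else 0 := by
  split_ifs with h
  · subst h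
    simp [dotp_zero_right, e_zero, cardG]
  · obtain ⟨i, hi⟩ : ∃ i, v i ≠ 0 := by
      by_contra hc
      push_neg at hc
      exact h (funext fun i => hc i)
    have hvi : v i = 1 := (zmod2_cases (v i)).resolve_left hi
    apply Finset.sum_ninvolution (fun lam => lam + Pi.single i 1)
    · intro lam
      have : dotp (lam + Pi.single i 1) v = dotp lam v + 1 := by
        rw [dotp_add_left, dotp_comm (Pi.single i 1) v, dotp_single, hvi]
      rw [this, e_add, e_one]
      ring
    · intro lam _ hle
      have := congrFun hle i
      simp at this
    · intro lam; exact Finset.mem_univ _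
    · intro lam
      funext j
      by_cases hji : j = i
      · subst hji; simp [Pi.single_apply, zmod2_add11]
      · simp [Pi.single_apply, hji]

/-! ### ANF and span machinery -/

def mono (S : Finset (Fin n)) (x : Fin n → ZMod 2) : ZMod 2 := ∏ i ∈ S, x i

def coef (f : (Fin n → ZMod 2) → ZMod 2) (S : Finset (Fin n)) : ZMod 2 :=
  ∑ x ∈ Finset.univ.filter (fun x : Fin n → ZMod 2 => ∀ i, x i = 1 → i ∈ S), f x

def supp (x : Fin n → ZMod 2) : Finset (Fin n) := Finset.univ.filter (fun i => x i = 1)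

lemma mem_supp {x : Fin n → ZMod 2} {i : Fin n} : i ∈ supp x ↔ x i = 1 := by
  simp [supp]

lemma mono_eq (S : Finset (Fin n)) (x : Fin n → ZMod 2) :
    mono S x = if S ⊆ supp x then 1 else 0 := by
  split_ifs with h
  · exact Finset.prod_eq_one fun i hi => mem_supp.mp (h hi)
  · obtain ⟨i, hiS, hix⟩ : ∃ i ∈ S, i ∉ supp x := by
      by_contra hc; push_neg at hc; exact h hc
    have : x i = 0 := (zmod2_cases (x i)).resolve_right (fun h1 => hix (mem_supp.mpr h1))
    exact Finset.prod_eq_zero hiS this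

lemma supp_inj {x y : Fin n → ZMod 2} (h : supp x = supp y) : x = y := by
  funext i
  have := Finset.ext_iff.mp h i
  simp only [mem_supp] at this
  rcases zmod2_cases (x i) with hx | hx <;> rcases zmod2_cases (y i) with hy | hy <;>
    simp_all

lemma anf_expand (f : (Fin n → ZMod 2) → ZMod 2) (x : Fin n → ZMod 2) :
    f x = ∑ S : Finset (Fin n), coef f S * mono S x := by
  have h1 : ∀ S : Finset (Fin n),
      coef f S = ∑ y : Fin n → ZMod 2, if supp y ⊆ S then f y else 0 := by
    intro S
    rw [coef, Finset.sum_filter]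
    apply Finset.sum_congr rfl
    intro y _
    congr 1
    simp only [eq_iff_iff]
    constructor
    · intro hy i hi; exact hy i (mem_supp.mp hi)
    · intro hy i h1i; exact hy (mem_supp.mpr h1i)
  have key : ∀ y : Fin n → ZMod 2,
      (∑ S : Finset (Fin n), if supp y ⊆ S ∧ S ⊆ supp x then (1 : ZMod 2) else 0) =
        if y = x then 1 else 0 := by
    intro y
    have hcard : (∑ S : Finset (Fin n), if supp y ⊆ S ∧ S ⊆ supp x then (1 : ZMod 2) else 0) =
        ((Finset.Icc (supp y) (supp x)).card : ZMod 2) := by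
      have hfe : Finset.univ.filter (fun S : Finset (Fin n) => supp y ⊆ S ∧ S ⊆ supp x) =
          Finset.Icc (supp y) (supp x) := by
        ext S
        simp [Finset.mem_Icc, Finset.le_iff_subset]
      rw [Finset.sum_boole, hfe]
    rw [hcard]
    by_cases hsub : supp y ⊆ supp x
    · rw [Finset.card_Icc_finset hsub]
      by_cases hyx : y = x
      · subst hyx
        simp
      · have hne : supp y ≠ supp x := fun hc => hyx (supp_inj hc)
        have hlt : (supp y).card < (supp x).card :=
          Finset.card_lt_card (lt_of_le_of_ne hsub hne)
        have : (supp x).card - (supp y).card ≠ 0 := by omega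
        obtain ⟨k, hk⟩ := Nat.exists_eq_succ_of_ne_zero this
        rw [hk, if_neg hyx]
        push_cast
        rw [pow_succ]
        norm_num
        right
        decide
    · have : Finset.Icc (supp y) (supp x) = ∅ := Finset.Icc_eq_empty hsub
      rw [this]
      have hyx : y ≠ x := fun hc => hsub (by rw [hc])
      simp [hyx]
  calc f x = ∑ y : Fin n → ZMod 2, f y * (if y = x then 1 else 0) := by simp
    _ = ∑ y : Fin n → ZMod 2, f y *
          ∑ S : Finset (Fin n), if supp y ⊆ S ∧ S ⊆ supp x then (1 : ZMod 2) else 0 := by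
        simp_rw [key]
    _ = ∑ y : Fin n → ZMod 2, ∑ S : Finset (Fin n),
          (if supp y ⊆ S then f y else 0) * mono S x := by
        apply Finset.sum_congr rfl; intro y _
        rw [Finset.mul_sum]
        apply Finset.sum_congr rfl; intro S _
        rw [mono_eq]
        by_cases h1' : supp y ⊆ S <;> by_cases h2' : S ⊆ supp x <;> simp [h1', h2']
    _ = ∑ S : Finset (Fin n), ∑ y : Fin n → ZMod 2,
          (if supp y ⊆ S then f y else 0) * mono S x := Finset.sum_comm
    _ = ∑ S : Finset (Fin n), coef f S * mono S x := by
        apply Finset.sum_congr rfl; intro S _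
        rw [h1, Finset.sum_mul]

def MSpan (n d : ℕ) : Submodule (ZMod 2) ((Fin n → ZMod 2) → ZMod 2) :=
  Submodule.span (ZMod 2) {f | ∃ S : Finset (Fin n), S.card ≤ d ∧ f = mono S}

lemma degLe_mem {f : (Fin n → ZMod 2) → ZMod 2} (h : degLe f 3) : f ∈ MSpan n 3 := by
  have hf : f = ∑ S : Finset (Fin n), coef f S • mono S := by
    funext x
    rw [anf_expand f x]
    simp [Finset.sum_apply]
  rw [hf]
  apply Submodule.sum_mem
  intro S _
  by_cases hS : S.card ≤ 3
  · exact Submodule.smul_mem _ _ (Submodule.subset_span ⟨S, hS, rfl⟩)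
  · have : coef f S = 0 := h S (by omega)
    rw [this, zero_smul]
    exact Submodule.zero_mem _

lemma Dd_mono_mem (a : Fin n → ZMod 2) (S : Finset (Fin n)) (d : ℕ) (hS : S.card ≤ d + 1) :
    Dd a (mono S) ∈ MSpan n d := by
  have key : Dd a (mono S) =
      ∑ U ∈ S.powerset.erase ∅, (∏ j ∈ U, a j) • mono (S \ U) := by
    funext x
    have hx : mono S (x + a) = ∑ U ∈ S.powerset, (∏ j ∈ U, a j) * ∏ j ∈ S \ U, x j := by
      rw [mono, show ∀ y : Fin n → ZMod 2, ∏ i ∈ S, y i = ∏ i ∈ S, y i from fun _ => rfl]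
      rw [← Finset.prod_add]
      apply Finset.prod_congr rfl
      intro j _
      simp [add_comm]
    have hsplit : (∑ U ∈ S.powerset, (∏ j ∈ U, a j) * ∏ j ∈ S \ U, x j) =
        (∑ U ∈ S.powerset.erase ∅, (∏ j ∈ U, a j) * ∏ j ∈ S \ U, x j) + mono S x := by
      rw [← Finset.sum_erase_add _ _ (Finset.empty_mem_powerset S)]
      simp [mono]
    simp only [Dd, hx, hsplit, Finset.sum_apply, Pi.smul_apply, smul_eq_mul]
    rw [add_assoc, zmod2_self, add_zero]
    rfl
  rw [key]
  apply Submodule.sum_mem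
  intro U hU
  obtain ⟨hUne, hUS⟩ := Finset.mem_erase.mp hU
  have hUS' : U ⊆ S := Finset.mem_powerset.mp hUS
  apply Submodule.smul_mem
  apply Submodule.subset_span
  refine ⟨S \ U, ?_, rfl⟩
  have h1 : (S \ U).card = S.card - U.card := Finset.card_sdiff_of_subset hUS'
  have h2 : 1 ≤ U.card := Finset.card_pos.mpr (Finset.nonempty_iff_ne_empty.mpr hUne)
  omega

lemma Dd_add (a : Fin n → ZMod 2) (f g : (Fin n → ZMod 2) → ZMod 2) :
    Dd a (f + g) = Dd a f + Dd a g := by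
  funext x; simp [Dd]; ring

lemma Dd_smul (a : Fin n → ZMod 2) (c : ZMod 2) (f : (Fin n → ZMod 2) → ZMod 2) :
    Dd a (c • f) = c • Dd a f := by
  funext x; simp [Dd]; ring

lemma Dd_zero (a : Fin n → ZMod 2) : Dd a (0 : (Fin n → ZMod 2) → ZMod 2) = 0 := by
  funext x; simp [Dd]

lemma Dd_mem (a : Fin n → ZMod 2) {d : ℕ} {f : (Fin n → ZMod 2) → ZMod 2}
    (hf : f ∈ MSpan n (d + 1)) : Dd a f ∈ MSpan n d := by
  induction hf using Submodule.span_induction with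
  | mem g hg =>
    obtain ⟨S, hS, rfl⟩ := hg
    exact Dd_mono_mem a S d hS
  | zero => rw [Dd_zero]; exact Submodule.zero_mem _
  | add g h _ _ hg hh => rw [Dd_add]; exact Submodule.add_mem _ hg hh
  | smul c g _ hg => rw [Dd_smul]; exact Submodule.smul_mem _ _ hg

lemma MSpan_zero_const {f : (Fin n → ZMod 2) → ZMod 2} (hf : f ∈ MSpan n 0)
    (x y : Fin n → ZMod 2) : f x = f y := by
  induction hf using Submodule.span_induction with
  | mem g hg =>
    obtain ⟨S, hS, rfl⟩ := hg
    have : S = ∅ := Finset.card_eq_zero.mp (Nat.le_zero.mp hS)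
    subst this
    simp [mono]
  | zero => simp
  | add g h _ _ hg hh => simp [hg, hh]
  | smul c g _ hg => simp [hg]

lemma pc1 (x y : Fin n → ZMod 2) : x + (x + y) = y := by
  funext i
  simp only [Pi.add_apply]
  exact (by decide : ∀ a b : ZMod 2, a + (a + b) = b) _ _

lemma pc2 (x y z : Fin n → ZMod 2) : x + (x + z) + (x + y) = x + y + z := by
  funext i
  simp only [Pi.add_apply]
  exact (by decide : ∀ a b c : ZMod 2, a + (a + c) + (a + b) = a + b + c) _ _ _

lemma DD_eq_Dd (b a : Fin n → ZMod 2) (g : (Fin n → ZMod 2) → ZMod 2) :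
    Dd b (Dd a g) = DD b a g := by
  funext w
  simp only [Dd, DD]
  rw [show w + b + a = w + a + b by ring]
  ring

lemma quad_of_degLe {g : (Fin n → ZMod 2) → ZMod 2} (hg : degLe g 3)
    (b a x y z : Fin n → ZMod 2) :
    DD b a g x + DD b a g y + DD b a g z + DD b a g (x + y + z) = 0 := by
  have h2 : DD b a g ∈ MSpan n 1 := by
    rw [← DD_eq_Dd]
    exact Dd_mem b (Dd_mem a (degLe_mem hg))
  have h3 : Dd (x + y) (DD b a g) ∈ MSpan n 0 := Dd_mem _ h2
  have hc := MSpan_zero_const h3 x (x + (x + z))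
  simp only [Dd] at hc
  rw [pc1 x y, pc2 x y z, pc1 x z] at hc
  generalize DD b a g x = A at hc ⊢
  generalize DD b a g y = B at hc ⊢
  generalize DD b a g z = C at hc ⊢
  generalize DD b a g (x + y + z) = D at hc ⊢
  revert hc
  revert A B C D
  decide

def lvec (h : (Fin n → ZMod 2) → ZMod 2) : Fin n → ZMod 2 :=
  fun i => h (Pi.single i 1) + h 0

lemma affine_rep {h : (Fin n → ZMod 2) → ZMod 2}
    (H : ∀ x y z, h x + h y + h z + h (x + y + z) = 0) (x : Fin n → ZMod 2) :
    h x = h 0 + dotp (lvec h) x := by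
  suffices key : ∀ s : Finset (Fin n), ∀ x : Fin n → ZMod 2,
      (∀ i, x i = 1 → i ∈ s) → h x = h 0 + dotp (lvec h) x from
    key Finset.univ x (fun i _ => Finset.mem_univ i)
  intro s
  induction s using Finset.induction with
  | empty =>
    intro x hx
    have hx0 : x = 0 := funext fun i =>
      (zmod2_cases (x i)).resolve_right fun h1 => absurd (hx i h1) (Finset.notMem_empty i)
    subst hx0
    simp [dotp_zero_right]
  | @insert i s his ih =>
    intro x hx
    by_cases hxi : x i = 1
    · set x' := Function.update x i 0 with hx'def
      have hxx : x = x' + Pi.single i 1 := by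
        funext j
        by_cases hji : j = i
        · subst hji; simp [hx'def, hxi]
        · simp [hx'def, Function.update_of_ne hji, Pi.single_apply, hji]
      have hx's : ∀ j, x' j = 1 → j ∈ s := by
        intro j hj
        have hji : j ≠ i := by
          intro hc; subst hc
          simp [hx'def] at hj
        have hxj : x j = 1 := by rwa [hx'def, Function.update_of_ne hji] at hj
        exact (Finset.mem_insert.mp (hx j hxj)).resolve_left hji
      have hH := H x' (Pi.single i 1) 0
      rw [add_zero] at hH
      have hihx : h x' = h 0 + dotp (lvec h) x' := ih x' hx's
      have hdot : dotp (lvec h) x = dotp (lvec h) x' + lvec h i := by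
        rw [hxx, dotp_add_right, dotp_single]
      rw [hdot, hxx, show lvec h i = h (Pi.single i 1) + h 0 from rfl]
      generalize h (x' + Pi.single i 1) = E at hH ⊢
      generalize h x' = A at hH hihx ⊢
      generalize h (Pi.single i 1) = B at hH ⊢
      generalize h 0 = C at hH hihx ⊢
      generalize dotp (lvec h) x' = D at hihx ⊢
      revert hH hihx
      revert A B C D E
      decide
    · have hxs : ∀ j, x j = 1 → j ∈ s := fun j hj =>
        (Finset.mem_insert.mp (hx j hj)).resolve_left fun e => hxi (e ▸ hj)
      exact ih x hxs

lemma Fcal_eq_sum_e (h : (Fin n → ZMod 2) → ZMod 2) : Fcal h = ∑ x, e (h x) := rfl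

lemma Fcal_affine {h : (Fin n → ZMod 2) → ZMod 2}
    (H : ∀ x y z, h x + h y + h z + h (x + y + z) = 0) :
    Fcal h = 2 ^ n *
      ((if ∀ x, h x = 0 then 1 else 0) - if ∀ x, h x = 1 then (1 : ℤ) else 0) := by
  have hrep := affine_rep H
  have hF : Fcal h = e (h 0) * ∑ x : Fin n → ZMod 2, e (dotp x (lvec h)) := by
    rw [Fcal_eq_sum_e, Finset.mul_sum]
    apply Finset.sum_congr rfl
    intro x _
    rw [hrep x, e_add, dotp_comm]
  rw [sum_e_dotp (lvec h)] at hF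
  by_cases hv : lvec h = 0
  · have hconst : ∀ x, h x = h 0 := fun x => by
      rw [hrep x, hv, dotp_zero_left, add_zero]
    rcases zmod2_cases (h 0) with h0 | h0
    · have hall : ∀ x, h x = 0 := fun x => by rw [hconst x, h0]
      have hnall : ¬ ∀ x, h x = 1 := fun hc =>
        (by decide : ¬ (0 : ZMod 2) = 1) ((hall 0).symm.trans (hc 0))
      rw [if_pos hall, if_neg hnall, hF, h0, if_pos hv, e_zero]
      ring
    · have hall : ∀ x, h x = 1 := fun x => by rw [hconst x, h0]
      have hnall : ¬ ∀ x, h x = 0 := fun hc => by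
        have := hc 0; rw [h0] at this; exact (by decide : (1:ZMod 2) ≠ 0) this
      rw [if_neg hnall, if_pos hall, hF, h0, if_pos hv, e_one]
      ring
  · rw [hF, if_neg hv, mul_zero]
    have h1 : ¬ ∀ x, h x = 0 := by
      intro hc
      apply hv
      funext i
      simp [lvec, hc]
    have h2 : ¬ ∀ x, h x = 1 := by
      intro hc
      apply hv
      funext i
      simp [lvec, hc, (by decide : (1 : ZMod 2) + 1 = 0)]
    rw [if_neg h1, if_neg h2]
    ring

lemma Mcal_eq {g : (Fin n → ZMod 2) → ZMod 2} (a : Fin n → ZMod 2)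
    (Hq : ∀ b x y z, DD b a g x + DD b a g y + DD b a g z + DD b a g (x + y + z) = 0) :
    (2 ^ n : ℤ) * Mcal a g = ∑ b : Fin n → ZMod 2, Fcal (DD b a g) := by
  have hb : ∀ b, Fcal (DD b a g) = 2 ^ n *
      ((if ∀ x, DD b a g x = 0 then 1 else 0) - if ∀ x, DD b a g x = 1 then (1:ℤ) else 0) :=
    fun b => Fcal_affine (Hq b)
  rw [Mcal, ← Finset.sum_boole (p := fun b : Fin n → ZMod 2 => ∀ x, DD b a g x = 0),
    ← Finset.sum_boole (p := fun b : Fin n → ZMod 2 => ∀ x, DD b a g x = 1),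
    ← Finset.sum_sub_distrib, Finset.mul_sum]
  apply Finset.sum_congr rfl
  intro b _
  exact (hb b).symm


/-! ### Global counting identities -/

variable (F : (Fin n → ZMod 2) → (Fin n → ZMod 2))

def w4 (a b x : Fin n → ZMod 2) : Fin n → ZMod 2 :=
  F x + F (x + b) + F (x + a) + F (x + a + b)

def Ncount : ℤ :=
  ∑ a : Fin n → ZMod 2, ∑ b : Fin n → ZMod 2, ∑ x : Fin n → ZMod 2,
    if w4 F a b x = 0 then 1 else 0

def delta (a c : Fin n → ZMod 2) : ℕ :=
  (Finset.univ.filter fun x => F (x + a) + F x = c).card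

def Msum : ℤ :=
  ∑ lam ∈ Finset.univ.filter (fun lam : Fin n → ZMod 2 => lam ≠ 0),
    ∑ b ∈ Finset.univ.filter (fun b : Fin n → ZMod 2 => b ≠ 0),
      Mcal b (compF F lam)

lemma DD_compF (lam a b x : Fin n → ZMod 2) :
    DD b a (compF F lam) x = dotp lam (w4 F a b x) := by
  simp only [DD, compF, w4, dotp_add_right]

lemma pcEq (u v : Fin n → ZMod 2) : u + v = 0 ↔ u = v := by
  constructor
  · intro h
    funext i
    have := congrFun h i
    simp only [Pi.add_apply, Pi.zero_apply] at this
    exact (by decide : ∀ a b : ZMod 2, a + b = 0 → a = b) _ _ this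
  · rintro rfl
    funext i
    simp only [Pi.add_apply, Pi.zero_apply]
    exact zmod2_self _

lemma pc_self (u : Fin n → ZMod 2) : u + u = 0 := (pcEq u u).mpr rfl

lemma pc_aa (u a : Fin n → ZMod 2) : u + a + a = u := by
  funext i
  simp only [Pi.add_apply]
  exact (by decide : ∀ u a : ZMod 2, u + a + a = u) _ _

lemma cardne : ((Finset.univ.filter fun lam : Fin n → ZMod 2 => lam ≠ 0).card : ℤ) =
    2 ^ n - 1 := by
  rw [Finset.filter_ne', Finset.card_erase_of_mem (Finset.mem_univ 0), Finset.card_univ, cardG]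
  have h1 : 1 ≤ 2 ^ n := Nat.one_le_two_pow
  push_cast [h1]
  ring

lemma Fcal_zerofun : Fcal (fun _ : Fin n → ZMod 2 => (0 : ZMod 2)) = 2 ^ n := by
  rw [Fcal]
  simp [cardG]

lemma sum_Fcal_eq_Ncount :
    (∑ lam : Fin n → ZMod 2, ∑ a : Fin n → ZMod 2, ∑ b : Fin n → ZMod 2,
      Fcal (DD b a (compF F lam))) = 2 ^ n * Ncount F := by
  have step1 : (∑ lam : Fin n → ZMod 2, ∑ a : Fin n → ZMod 2, ∑ b : Fin n → ZMod 2,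
      Fcal (DD b a (compF F lam))) =
      ∑ a : Fin n → ZMod 2, ∑ b : Fin n → ZMod 2, ∑ x : Fin n → ZMod 2,
        ∑ lam : Fin n → ZMod 2, e (dotp lam (w4 F a b x)) := by
    rw [Finset.sum_comm]
    apply Finset.sum_congr rfl
    intro a _
    rw [Finset.sum_comm]
    apply Finset.sum_congr rfl
    intro b _
    have : ∀ lam, Fcal (DD b a (compF F lam)) =
        ∑ x : Fin n → ZMod 2, e (dotp lam (w4 F a b x)) := by
      intro lam
      rw [Fcal_eq_sum_e]
      apply Finset.sum_congr rfl
      intro x _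
      rw [DD_compF]
    simp_rw [this]
    rw [Finset.sum_comm]
  rw [step1, Ncount, Finset.mul_sum]
  apply Finset.sum_congr rfl
  intro a _
  rw [Finset.mul_sum]
  apply Finset.sum_congr rfl
  intro b _
  rw [Finset.mul_sum]
  apply Finset.sum_congr rfl
  intro x _
  rw [sum_e_dotp]
  split_ifs <;> ring

lemma Mcal_zero_dir (g : (Fin n → ZMod 2) → ZMod 2) : Mcal 0 g = 2 ^ n := by
  have h0 : ∀ b x, DD b (0 : Fin n → ZMod 2) g x = 0 := by
    intro b x
    simp only [DD, add_zero]
    generalize g x = u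
    generalize g (x + b) = v
    revert u v
    decide
  have h1 : (Finset.univ.filter fun b : Fin n → ZMod 2 => ∀ x, DD b 0 g x = 0) =
      Finset.univ := Finset.filter_true_of_mem (fun b _ => h0 b)
  have h2 : (Finset.univ.filter fun b : Fin n → ZMod 2 => ∀ x, DD b 0 g x = 1) = ∅ := by
    apply Finset.filter_false_of_mem
    intro b _ hc
    have := (h0 b 0).symm.trans (hc 0)
    exact (by decide : ¬ (0 : ZMod 2) = 1) this
  rw [Mcal, h1, h2, Finset.card_univ, cardG, Finset.card_empty]
  push_cast
  ring

lemma Ncount_eq_Msum (hdeg1 : ∀ lam : Fin n → ZMod 2, lam ≠ 0 → degLe (compF F lam) 3) :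
    Ncount F = 2 ^ n * 2 ^ n + 2 ^ n * (2 ^ n - 1) + Msum F := by
  have hsplit := Finset.sum_filter_add_sum_filter_not Finset.univ
    (fun lam : Fin n → ZMod 2 => lam = 0)
    (fun lam => ∑ a : Fin n → ZMod 2, ∑ b : Fin n → ZMod 2, Fcal (DD b a (compF F lam)))
  have hfe : (Finset.univ.filter fun lam : Fin n → ZMod 2 => lam = 0) = {0} := by
    ext lam; simp
  have hT0 : (∑ a : Fin n → ZMod 2, ∑ b : Fin n → ZMod 2,
      Fcal (DD b a (compF F 0))) = 2 ^ n * (2 ^ n * 2 ^ n) := by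
    have hz : ∀ a b : Fin n → ZMod 2, DD b a (compF F 0) = fun _ => (0 : ZMod 2) := by
      intro a b
      funext x
      simp [DD, compF, dotp_zero_left]
    have : ∀ a b : Fin n → ZMod 2, Fcal (DD b a (compF F 0)) = 2 ^ n := by
      intro a b; rw [hz a b, Fcal_zerofun]
    simp_rw [this, Finset.sum_const, Finset.card_univ, cardG]
    push_cast
    ring
  have hTlam : ∀ lam : Fin n → ZMod 2, lam ≠ 0 →
      (∑ a : Fin n → ZMod 2, ∑ b : Fin n → ZMod 2, Fcal (DD b a (compF F lam))) =
      2 ^ n * (2 ^ n + ∑ a ∈ Finset.univ.filter (fun a : Fin n → ZMod 2 => a ≠ 0),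
        Mcal a (compF F lam)) := by
    intro lam hlam
    have hq : ∀ a : Fin n → ZMod 2, (∑ b : Fin n → ZMod 2, Fcal (DD b a (compF F lam))) =
        2 ^ n * Mcal a (compF F lam) := by
      intro a
      exact (Mcal_eq a (fun b x y z => quad_of_degLe (hdeg1 lam hlam) b a x y z)).symm
    simp_rw [hq]
    rw [← Finset.mul_sum]
    congr 1
    have := Finset.sum_filter_add_sum_filter_not Finset.univ
      (fun a : Fin n → ZMod 2 => a = 0) (fun a => Mcal a (compF F lam))
    have hfe' : (Finset.univ.filter fun a : Fin n → ZMod 2 => a = 0) = {0} := by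
      ext a; simp
    rw [hfe', Finset.sum_singleton, Mcal_zero_dir] at this
    have hnotne : (Finset.univ.filter fun a : Fin n → ZMod 2 => ¬ a = 0) =
        (Finset.univ.filter fun a : Fin n → ZMod 2 => a ≠ 0) := rfl
    rw [hnotne] at this
    linarith [this]
  have h2n : (0 : ℤ) < 2 ^ n := by positivity
  apply mul_left_cancel₀ (ne_of_gt h2n)
  rw [← sum_Fcal_eq_Ncount, ← hsplit, hfe, Finset.sum_singleton, hT0]
  have hrest : (∑ lam ∈ Finset.univ.filter (fun lam : Fin n → ZMod 2 => ¬ lam = 0),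
      ∑ a : Fin n → ZMod 2, ∑ b : Fin n → ZMod 2, Fcal (DD b a (compF F lam))) =
      ∑ lam ∈ Finset.univ.filter (fun lam : Fin n → ZMod 2 => lam ≠ 0),
        (2 ^ n * (2 ^ n + ∑ a ∈ Finset.univ.filter (fun a : Fin n → ZMod 2 => a ≠ 0),
          Mcal a (compF F lam))) := by
    apply Finset.sum_congr rfl
    intro lam hlam
    exact hTlam lam (by simpa using hlam)
  rw [hrest, ← Finset.mul_sum, Finset.sum_add_distrib, Finset.sum_const, nsmul_eq_mul, cardne]
  simp only [Msum]
  ring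

lemma w4_zero_iff (a b x : Fin n → ZMod 2) :
    w4 F a b x = 0 ↔ F (x + a) + F x = F ((x + b) + a) + F (x + b) := by
  have harg : x + b + a = x + a + b := by ring
  have hw : w4 F a b x = (F (x + a) + F x) + (F ((x + b) + a) + F (x + b)) := by
    rw [w4, harg]
    ring
  rw [hw, pcEq]

lemma Ncount_delta :
    Ncount F = ∑ a : Fin n → ZMod 2, ∑ c : Fin n → ZMod 2, ((delta F a c : ℤ)) ^ 2 := by
  rw [Ncount]
  apply Finset.sum_congr rfl
  intro a _
  have step1 : (∑ b : Fin n → ZMod 2, ∑ x : Fin n → ZMod 2,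
      if w4 F a b x = 0 then (1 : ℤ) else 0) =
      ∑ x : Fin n → ZMod 2, ∑ y : Fin n → ZMod 2,
        if F (x + a) + F x = F (y + a) + F y then (1 : ℤ) else 0 := by
    rw [Finset.sum_comm]
    apply Finset.sum_congr rfl
    intro x _
    rw [← Fintype.sum_equiv (Equiv.addLeft x)
      (fun b => if F (x + a) + F x = F ((x + b) + a) + F (x + b) then (1 : ℤ) else 0)
      (fun y => if F (x + a) + F x = F (y + a) + F y then (1 : ℤ) else 0)
      (fun b => by rw [Equiv.coe_addLeft])]
    apply Finset.sum_congr rfl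
    intro b _
    congr 1
    simp only [eq_iff_iff]
    exact w4_zero_iff F a b x
  rw [step1]
  have step2 : ∀ x y : Fin n → ZMod 2,
      (if F (x + a) + F x = F (y + a) + F y then (1 : ℤ) else 0) =
      ∑ c : Fin n → ZMod 2,
        (if F (x + a) + F x = c then (1 : ℤ) else 0) *
          (if F (y + a) + F y = c then (1 : ℤ) else 0) := by
    intro x y
    rw [Finset.sum_eq_single (F (y + a) + F y)]
    · simp
    · intro c _ hc
      have hz : (if F (y + a) + F y = c then (1 : ℤ) else 0) = 0 :=
        if_neg (fun e => hc e.symm)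
      rw [hz, mul_zero]
    · intro hmem
      exact absurd (Finset.mem_univ _) hmem
  simp_rw [step2]
  have e1 : ∀ x : Fin n → ZMod 2, (∑ y : Fin n → ZMod 2, ∑ c : Fin n → ZMod 2,
      (if F (x + a) + F x = c then (1 : ℤ) else 0) *
        (if F (y + a) + F y = c then (1 : ℤ) else 0)) =
      ∑ c : Fin n → ZMod 2, (if F (x + a) + F x = c then (1 : ℤ) else 0) *
          ∑ y : Fin n → ZMod 2, (if F (y + a) + F y = c then (1 : ℤ) else 0) := by
    intro x
    rw [Finset.sum_comm]
    apply Finset.sum_congr rfl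
    intro c _
    rw [Finset.mul_sum]
  simp_rw [e1]
  rw [Finset.sum_comm]
  apply Finset.sum_congr rfl
  intro c _
  rw [← Finset.sum_mul]
  have hx : (∑ x : Fin n → ZMod 2, if F (x + a) + F x = c then (1 : ℤ) else 0) =
      (delta F a c : ℤ) := by
    rw [delta]
    exact_mod_cast Finset.sum_boole _ _
  rw [hx, sq]

lemma delta_zerodir (c : Fin n → ZMod 2) :
    delta F 0 c = if c = 0 then 2 ^ n else 0 := by
  rw [delta]
  split_ifs with hc
  · subst hc
    rw [Finset.filter_true_of_mem, Finset.card_univ, cardG]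
    intro x _
    rw [add_zero]
    exact pc_self (F x)
  · rw [Finset.filter_false_of_mem, Finset.card_empty]
    intro x _ hcon
    rw [add_zero, pc_self (F x)] at hcon
    exact hc hcon.symm

lemma delta_even {a : Fin n → ZMod 2} (ha : a ≠ 0) (c : Fin n → ZMod 2) :
    Even (delta F a c) := by
  rw [even_iff_two_dvd, ← ZMod.natCast_eq_zero_iff]
  have hcast : ((delta F a c : ℕ) : ZMod 2) =
      ∑ x ∈ Finset.univ.filter (fun x => F (x + a) + F x = c), (1 : ZMod 2) := by
    rw [delta]
    simp
  rw [hcast]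
  apply Finset.sum_involution (fun x _ => x + a)
  · intro x _; decide
  · intro x _ _ he
    exact ha (by rwa [add_eq_left] at he)
  · intro x hx
    rw [Finset.mem_filter] at hx ⊢
    refine ⟨Finset.mem_univ _, ?_⟩
    rw [pc_aa x a, add_comm]
    exact hx.2
  · intro x _
    exact pc_aa x a


lemma delta_sum (a : Fin n → ZMod 2) : ∑ c : Fin n → ZMod 2, (delta F a c : ℤ) = 2 ^ n := by
  have h1 : ∀ c : Fin n → ZMod 2, (delta F a c : ℤ) =
      ∑ x : Fin n → ZMod 2, if F (x + a) + F x = c then (1 : ℤ) else 0 := by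
    intro c
    rw [delta]
    exact_mod_cast (Finset.sum_boole _ _).symm
  simp_rw [h1]
  rw [Finset.sum_comm]
  have h2 : ∀ x : Fin n → ZMod 2,
      (∑ c : Fin n → ZMod 2, if F (x + a) + F x = c then (1 : ℤ) else 0) = 1 := by
    intro x
    rw [Finset.sum_ite_eq]
    simp
  simp_rw [h2]
  rw [Finset.sum_const, Finset.card_univ, cardG, nsmul_eq_mul, mul_one]
  push_cast
  ring

lemma even_sq_ge (d : ℕ) (hd : Even d) : 2 * (d : ℤ) ≤ (d : ℤ) ^ 2 := by
  obtain ⟨r, rfl⟩ := hd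
  have h1 : r ≤ r ^ 2 := Nat.le_self_pow two_ne_zero r
  have h2 : (r : ℤ) ≤ ((r : ℤ)) ^ 2 := by exact_mod_cast h1
  push_cast
  nlinarith [h2]

lemma even_sq_iff (d : ℕ) (hd : Even d) : ((d : ℤ) ^ 2 = 2 * d) ↔ d ≤ 2 := by
  obtain ⟨r, rfl⟩ := hd
  constructor
  · intro h
    push_cast at h
    by_contra hc
    push_neg at hc
    have hr : (2 : ℤ) ≤ (r : ℤ) := by exact_mod_cast (by omega : 2 ≤ r)
    nlinarith
  · intro h
    have : r = 0 ∨ r = 1 := by omega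
    rcases this with rfl | rfl <;> norm_num

lemma apn_iff : IsAPN F ↔ ∀ a ∈ (Finset.univ.filter fun a : Fin n → ZMod 2 => a ≠ 0),
    ∀ c : Fin n → ZMod 2, delta F a c ≤ 2 := by
  constructor
  · intro h a ha c
    exact h a (by simpa using ha) c
  · intro h a ha c
    exact h a (by simpa using ha) c

end S18

theorem stmt18 (n : ℕ) (F : (Fin n → ZMod 2) → (Fin n → ZMod 2))
    (hdeg : (∀ lam : Fin n → ZMod 2, lam ≠ 0 → degLe (compF F lam) 3) ∧
      ¬ (∀ lam : Fin n → ZMod 2, lam ≠ 0 → degLe (compF F lam) 1)) :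
    (∑ lam ∈ Finset.univ.filter (fun lam : Fin n → ZMod 2 => lam ≠ 0),
        ∑ b ∈ Finset.univ.filter (fun b : Fin n → ZMod 2 => b ≠ 0),
          Mcal b (compF F lam)) ≥ 2 ^ n * ((2 : ℤ) ^ n - 1) ∧
    (IsAPN F ↔
      (∑ lam ∈ Finset.univ.filter (fun lam : Fin n → ZMod 2 => lam ≠ 0),
        ∑ b ∈ Finset.univ.filter (fun b : Fin n → ZMod 2 => b ≠ 0),
          Mcal b (compF F lam)) = 2 ^ n * ((2 : ℤ) ^ n - 1)) := by
  obtain ⟨hdeg1, -⟩ := hdeg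
  have hMsum : (∑ lam ∈ Finset.univ.filter (fun lam : Fin n → ZMod 2 => lam ≠ 0),
      ∑ b ∈ Finset.univ.filter (fun b : Fin n → ZMod 2 => b ≠ 0),
        Mcal b (compF F lam)) = S18.Msum F := rfl
  have hN := S18.Ncount_eq_Msum F hdeg1
  have hNd := S18.Ncount_delta F
  set A : ℤ := ∑ a ∈ Finset.univ.filter (fun a : Fin n → ZMod 2 => a ≠ 0),
    ∑ c : Fin n → ZMod 2, ((S18.delta F a c : ℤ)) ^ 2 with hAdef
  have hsplit := Finset.sum_filter_add_sum_filter_not Finset.univ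
    (fun a : Fin n → ZMod 2 => a = 0)
    (fun a => ∑ c : Fin n → ZMod 2, ((S18.delta F a c : ℤ)) ^ 2)
  have hfe : (Finset.univ.filter fun a : Fin n → ZMod 2 => a = 0) = {0} := by
    ext a; simp
  have h0term : (∑ c : Fin n → ZMod 2, ((S18.delta F 0 c : ℤ)) ^ 2) = 2 ^ n * 2 ^ n := by
    have : ∀ c : Fin n → ZMod 2, ((S18.delta F 0 c : ℤ)) ^ 2 =
        if c = 0 then (2 : ℤ) ^ n * 2 ^ n else 0 := by
      intro c
      rw [S18.delta_zerodir]
      split_ifs <;> push_cast <;> ring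
    simp_rw [this]
    rw [Finset.sum_ite_eq' Finset.univ (0 : Fin n → ZMod 2) (fun _ => (2 : ℤ) ^ n * 2 ^ n)]
    simp
  have hNdA : S18.Ncount F = 2 ^ n * 2 ^ n + A := by
    rw [hNd, ← hsplit, hfe, Finset.sum_singleton, h0term, hAdef]
  have hkey : S18.Msum F = A - 2 ^ n * ((2 : ℤ) ^ n - 1) := by
    rw [hNdA] at hN
    linarith
  have hbound : ∀ a ∈ (Finset.univ.filter fun a : Fin n → ZMod 2 => a ≠ 0),
      (2 : ℤ) * 2 ^ n ≤ ∑ c : Fin n → ZMod 2, ((S18.delta F a c : ℤ)) ^ 2 := by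
    intro a ha
    have ha0 : a ≠ 0 := by simpa using ha
    calc (2 : ℤ) * 2 ^ n = ∑ c : Fin n → ZMod 2, 2 * (S18.delta F a c : ℤ) := by
          rw [← Finset.mul_sum, S18.delta_sum]
      _ ≤ ∑ c : Fin n → ZMod 2, ((S18.delta F a c : ℤ)) ^ 2 :=
          Finset.sum_le_sum (fun c _ => S18.even_sq_ge _ (S18.delta_even F ha0 c))
  have hconst : (((2 : ℤ) ^ n - 1) * (2 * 2 ^ n)) =
      ∑ _a ∈ (Finset.univ.filter fun a : Fin n → ZMod 2 => a ≠ 0), (2 : ℤ) * 2 ^ n := by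
    rw [Finset.sum_const, nsmul_eq_mul, S18.cardne]
  have hA : ((2 : ℤ) ^ n - 1) * (2 * 2 ^ n) ≤ A := by
    rw [hconst]
    exact Finset.sum_le_sum hbound
  have innerIff : ∀ a : Fin n → ZMod 2, a ≠ 0 →
      (((2 : ℤ) * 2 ^ n = ∑ c : Fin n → ZMod 2, ((S18.delta F a c : ℤ)) ^ 2) ↔
        ∀ c : Fin n → ZMod 2, S18.delta F a c ≤ 2) := by
    intro a ha0
    have hle : ∀ c ∈ (Finset.univ : Finset (Fin n → ZMod 2)),
        2 * (S18.delta F a c : ℤ) ≤ ((S18.delta F a c : ℤ)) ^ 2 :=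
      fun c _ => S18.even_sq_ge _ (S18.delta_even F ha0 c)
    have h2 := Finset.sum_eq_sum_iff_of_le hle
    have h3 : (∑ c : Fin n → ZMod 2, 2 * (S18.delta F a c : ℤ)) = 2 * 2 ^ n := by
      rw [← Finset.mul_sum, S18.delta_sum]
    rw [← h3]
    constructor
    · intro h c
      exact (S18.even_sq_iff _ (S18.delta_even F ha0 c)).mp ((h2.mp h) c (Finset.mem_univ c)).symm
    · intro h
      exact h2.mpr (fun c _ => ((S18.even_sq_iff _ (S18.delta_even F ha0 c)).mpr (h c)).symm)
  constructor
  · rw [hMsum, hkey]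
    nlinarith [hA]
  · rw [S18.apn_iff, hMsum, hkey]
    constructor
    · intro hapn
      have h4 : ∀ a ∈ (Finset.univ.filter fun a : Fin n → ZMod 2 => a ≠ 0),
          (2 : ℤ) * 2 ^ n = ∑ c : Fin n → ZMod 2, ((S18.delta F a c : ℤ)) ^ 2 :=
        fun a ha => (innerIff a (by simpa using ha)).mpr (hapn a ha)
      have h5 : A = ((2 : ℤ) ^ n - 1) * (2 * 2 ^ n) := by
        rw [hconst, hAdef]
        exact (Finset.sum_congr rfl (fun a ha => (h4 a ha).symm))
      rw [h5]
      ring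
    · intro heq
      have h5 : (∑ _a ∈ (Finset.univ.filter fun a : Fin n → ZMod 2 => a ≠ 0),
          (2 : ℤ) * 2 ^ n) = A := by
        rw [← hconst]
        nlinarith [heq]
      have h6 := (Finset.sum_eq_sum_iff_of_le hbound).mp h5
      intro a ha
      exact (innerIff a (by simpa using ha)).mp (h6 a ha)
end

section
/- Let F : F_2^n → F_2^n be a vectorial Boolean function. Then Σ_{λ≠0} Σ_{b,c ∈ F_2^n} 𝓕(D_b D_c F_λ) ≥ 2^{2n+1}(2^n − 1), with equality if and only if F is APN. -/
open Finset

namespace S19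
variable {n : ℕ}

abbrev V (n : ℕ) := Fin n → ZMod 2

lemma addV_self (v : V n) : v + v = 0 := by
  funext i; exact CharTwo.add_self_eq_zero _

lemma addV_cancel (u v : V n) : u + v + v = u := by
  rw [add_assoc, addV_self, add_zero]

lemma dotp_add (a u v : V n) : dotp a (u + v) = dotp a u + dotp a v := by
  unfold dotp
  rw [← Finset.sum_add_distrib]
  exact Finset.sum_congr rfl fun i _ => by simp [mul_add]

lemma dotp_add_left (a b v : V n) : dotp (a + b) v = dotp a v + dotp b v := by
  unfold dotp
  rw [← Finset.sum_add_distrib]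
  exact Finset.sum_congr rfl fun i _ => by simp [add_mul]

lemma dotp_zero_left (v : V n) : dotp (0 : V n) v = 0 := by unfold dotp; simp

lemma dotp_zero_right (a : V n) : dotp a (0 : V n) = 0 := by unfold dotp; simp

lemma dotp_single (i : Fin n) (v : V n) : dotp (Pi.single i 1) v = v i := by
  unfold dotp
  rw [Finset.sum_eq_single i]
  · simp
  · intro j _ hj; simp [Pi.single_eq_of_ne hj]
  · simp

lemma zmod2_pow_add_one : ∀ t : ZMod 2, (-1 : ℤ) ^ ((t + 1).val) = -(-1 : ℤ) ^ t.val := by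
  decide

lemma zmod2_ne_zero' : ∀ t : ZMod 2, t ≠ 0 → t = 1 := by decide

lemma zmod2_ne_zero {t : ZMod 2} (h : t ≠ 0) : t = 1 := zmod2_ne_zero' t h

lemma card_V : Fintype.card (V n) = 2 ^ n := by
  simp [Fintype.card_fun]

lemma char_sum (v : V n) :
    ∑ lam : V n, (-1 : ℤ) ^ (dotp lam v).val = if v = 0 then (2 : ℤ) ^ n else 0 := by
  split_ifs with h
  · subst h
    simp only [dotp_zero_right, ZMod.val_zero, pow_zero, Finset.sum_const, nsmul_eq_mul, mul_one]
    rw [Finset.card_univ, card_V]; push_cast; ring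
  · obtain ⟨i, hvi⟩ : ∃ i, v i ≠ 0 := by
      by_contra hc; push_neg at hc; exact h (funext hc)
    have hvi1 : v i = 1 := zmod2_ne_zero hvi
    refine Finset.sum_involution (fun lam _ => lam + Pi.single i 1) ?_ ?_ (fun _ _ => Finset.mem_univ _) ?_
    · intro lam _
      rw [dotp_add_left, dotp_single, hvi1, zmod2_pow_add_one]
      ring
    · intro lam _ _ heq
      have h0 : Pi.single i (1 : ZMod 2) = (0 : V n) := by
        have := heq
        nth_rewrite 2 [← add_zero lam] at this
        exact add_left_cancel this
      have := congrFun h0 i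
      simp at this
    · intro lam _
      exact addV_cancel lam _

variable {n : ℕ}

/-- The relevant second-derivative expression of `F`. -/
def T (F : V n → V n) (b c x : V n) : V n :=
  F x + F (x + b) + F (x + c) + F (x + c + b)

lemma T_zero_of_deg (F : V n → V n) (b c x : V n) (h : b = 0 ∨ c = 0 ∨ b = c) :
    T F b c x = 0 := by
  unfold T
  rcases h with rfl | rfl | rfl
  · rw [add_zero, add_zero, addV_cancel, addV_self]
  · rw [add_zero, add_comm (F x) (F (x + b)), addV_cancel, addV_self]
  · rw [addV_cancel x b, addV_cancel (F x) (F (x + b)), addV_self]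

lemma Fcal_DD (F : V n → V n) (lam b c : V n) :
    Fcal (DD b c (compF F lam)) = ∑ x : V n, (-1 : ℤ) ^ ((dotp lam (T F b c x)).val) := by
  unfold Fcal DD compF T
  refine Finset.sum_congr rfl fun x _ => ?_
  rw [dotp_add, dotp_add, dotp_add]

/-- Count of "nondegenerate" vanishing second derivatives. -/
def Np (F : V n → V n) : ℤ :=
  ∑ b : V n, ∑ c : V n, ∑ x : V n,
    if T F b c x = 0 ∧ ¬(b = 0 ∨ c = 0 ∨ b = c) then (1 : ℤ) else 0

lemma split_ite {p q : Prop} [Decidable p] [Decidable q] (h : p → q) :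
    (if q then (1 : ℤ) else 0) = (if p then 1 else 0) + (if q ∧ ¬p then 1 else 0) := by
  by_cases hp : p
  · simp [hp, h hp]
  · by_cases hq : q <;> simp [hp, hq]

lemma sum_sum_mul (a : ℤ) (f : V n → V n → ℤ) :
    ∑ b : V n, ∑ c : V n, a * f b c = a * ∑ b : V n, ∑ c : V n, f b c := by
  rw [Finset.mul_sum]
  exact Finset.sum_congr rfl fun b _ => (Finset.mul_sum _ _ _).symm

lemma sum_sum_add (f g : V n → V n → ℤ) :
    ∑ b : V n, ∑ c : V n, (f b c + g b c)
      = (∑ b : V n, ∑ c : V n, f b c) + ∑ b : V n, ∑ c : V n, g b c := by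
  rw [← Finset.sum_add_distrib]
  exact Finset.sum_congr rfl fun b _ => Finset.sum_add_distrib


lemma master (F : V n → V n) :
    (∑ lam ∈ Finset.univ.filter (fun lam : V n => lam ≠ 0),
        ∑ b : V n, ∑ c : V n, Fcal (DD b c (compF F lam)))
      = 2 ^ (2 * n + 1) * ((2 : ℤ) ^ n - 1) + 2 ^ n * Np F := by
  have hsplit : ∑ lam : V n, (∑ b : V n, ∑ c : V n, Fcal (DD b c (compF F lam)))
      = (∑ b : V n, ∑ c : V n, Fcal (DD b c (compF F (0 : V n))))
        + ∑ lam ∈ Finset.univ.filter (fun lam : V n => lam ≠ 0),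
            ∑ b : V n, ∑ c : V n, Fcal (DD b c (compF F lam)) := by
    have hfe : Finset.univ.filter (fun lam : V n => lam ≠ 0) = Finset.univ.erase 0 := by
      ext l; simp
    rw [hfe]
    exact (Finset.add_sum_erase _ _ (Finset.mem_univ 0)).symm
  have hzero : (∑ b : V n, ∑ c : V n, Fcal (DD b c (compF F (0 : V n)))) = ((2 : ℤ) ^ n) ^ 3 := by
    simp only [Fcal_DD, dotp_zero_left, ZMod.val_zero, pow_zero]
    simp only [Finset.sum_const, Finset.card_univ, card_V, nsmul_eq_mul, mul_one]
    push_cast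
    ring
  have hall : ∑ lam : V n, (∑ b : V n, ∑ c : V n, Fcal (DD b c (compF F lam)))
      = ∑ b : V n, ∑ c : V n, ∑ x : V n, (if T F b c x = 0 then (2 : ℤ) ^ n else 0) := by
    simp only [Fcal_DD]
    rw [Finset.sum_comm]
    refine Finset.sum_congr rfl fun b _ => ?_
    rw [Finset.sum_comm]
    refine Finset.sum_congr rfl fun c _ => ?_
    rw [Finset.sum_comm]
    exact Finset.sum_congr rfl fun x _ => char_sum _
  have hptwise : ∀ b c x : V n, (if T F b c x = 0 then (2 : ℤ) ^ n else 0)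
      = 2 ^ n * ((if b = 0 ∨ c = 0 ∨ b = c then (1 : ℤ) else 0)
          + (if T F b c x = 0 ∧ ¬(b = 0 ∨ c = 0 ∨ b = c) then (1 : ℤ) else 0)) := by
    intro b c x
    rw [← split_ite (T_zero_of_deg F b c x), mul_ite, mul_one, mul_zero]
  have hK : ∑ b : V n, ∑ c : V n, (if b = 0 ∨ c = 0 ∨ b = c then (1 : ℤ) else 0)
      = 3 * 2 ^ n - 2 := by
    have hb : ∀ b : V n, (∑ c : V n, (if b = 0 ∨ c = 0 ∨ b = c then (1 : ℤ) else 0))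
        = (if b = 0 then (2 : ℤ) ^ n - 2 else 0) + 2 := by
      intro b
      by_cases hb0 : b = 0
      · subst hb0
        simp only [true_or, if_true, Finset.sum_const, Finset.card_univ, card_V,
          nsmul_eq_mul, mul_one]
        push_cast
        ring
      · have hpt : ∀ c : V n, (if b = 0 ∨ c = 0 ∨ b = c then (1 : ℤ) else 0)
            = if c ∈ ({0, b} : Finset (V n)) then (1 : ℤ) else 0 := by
          intro c
          have : (b = 0 ∨ c = 0 ∨ b = c) ↔ c ∈ ({0, b} : Finset (V n)) := by
            simp only [Finset.mem_insert, Finset.mem_singleton]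
            constructor
            · rintro (h | h | h)
              · exact absurd h hb0
              · exact Or.inl h
              · exact Or.inr h.symm
            · rintro (h | h)
              · exact Or.inr (Or.inl h)
              · exact Or.inr (Or.inr h.symm)
          rw [if_congr this rfl rfl]
        rw [Finset.sum_congr rfl fun c _ => hpt c, Finset.sum_ite_mem, Finset.univ_inter,
          Finset.sum_const]
        have hcard2 : ({0, b} : Finset (V n)).card = 2 := by
          rw [Finset.card_insert_of_notMem (by simpa using Ne.symm hb0), Finset.card_singleton]
        rw [hcard2, if_neg hb0]
        norm_num
    rw [Finset.sum_congr rfl fun b _ => hb b, Finset.sum_add_distrib,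
      Finset.sum_ite_eq' Finset.univ (0 : V n) (fun _ => (2 : ℤ) ^ n - 2),
      if_pos (Finset.mem_univ _), Finset.sum_const, Finset.card_univ, card_V]
    push_cast
    ring
  have hall2 : ∑ lam : V n, (∑ b : V n, ∑ c : V n, Fcal (DD b c (compF F lam)))
      = 2 ^ n * ((3 * 2 ^ n - 2) * 2 ^ n + Np F) := by
    rw [hall]
    have : ∀ b c : V n, ∑ x : V n, (if T F b c x = 0 then (2 : ℤ) ^ n else 0)
        = 2 ^ n * ((2 ^ n) * (if b = 0 ∨ c = 0 ∨ b = c then (1 : ℤ) else 0)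
            + ∑ x : V n, (if T F b c x = 0 ∧ ¬(b = 0 ∨ c = 0 ∨ b = c) then (1 : ℤ) else 0)) := by
      intro b c
      rw [Finset.sum_congr rfl fun x _ => hptwise b c x, ← Finset.mul_sum,
        Finset.sum_add_distrib, Finset.sum_const, Finset.card_univ, card_V, nsmul_eq_mul]
      push_cast
      ring_nf
    rw [Finset.sum_congr rfl fun b _ => Finset.sum_congr rfl fun c _ => this b c]
    rw [sum_sum_mul, sum_sum_add, sum_sum_mul, hK]
    unfold Np
    ring
  have hfil : (∑ lam ∈ Finset.univ.filter (fun lam : V n => lam ≠ 0),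
      ∑ b : V n, ∑ c : V n, Fcal (DD b c (compF F lam)))
      = 2 ^ n * ((3 * 2 ^ n - 2) * 2 ^ n + Np F) - ((2 : ℤ) ^ n) ^ 3 := by
    rw [hall2, hzero] at hsplit
    linarith
  rw [hfil]
  have hp : (2 : ℤ) ^ (2 * n + 1) = 2 * ((2 : ℤ) ^ n * (2 : ℤ) ^ n) := by
    rw [pow_succ, two_mul, pow_add]
    ring
  rw [hp]
  ring

lemma ite_one_nonneg (p : Prop) [Decidable p] : (0 : ℤ) ≤ if p then 1 else 0 := by
  split <;> norm_num

lemma np_nonneg (F : V n → V n) : 0 ≤ Np F := by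
  refine Finset.sum_nonneg fun b _ => Finset.sum_nonneg fun c _ => Finset.sum_nonneg fun x _ => ?_
  split <;> norm_num

lemma np_eq_zero_iff (F : V n → V n) :
    Np F = 0 ↔ ∀ b c x : V n, b ≠ 0 → c ≠ 0 → b ≠ c → T F b c x ≠ 0 := by
  constructor
  · intro h0 b c x hb hc hbc hT
    have hterm : (if T F b c x = 0 ∧ ¬(b = 0 ∨ c = 0 ∨ b = c) then (1 : ℤ) else 0) = 1 := by
      rw [if_pos ⟨hT, by tauto⟩]
    have h1 := Finset.single_le_sum
      (f := fun x' : V n => if T F b c x' = 0 ∧ ¬(b = 0 ∨ c = 0 ∨ b = c) then (1 : ℤ) else 0)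
      (fun i _ => ite_one_nonneg _) (Finset.mem_univ x)
    rw [hterm] at h1
    have h2 := Finset.single_le_sum
      (f := fun c' : V n => ∑ x' : V n,
        if T F b c' x' = 0 ∧ ¬(b = 0 ∨ c' = 0 ∨ b = c') then (1 : ℤ) else 0)
      (fun i _ => Finset.sum_nonneg fun j _ => ite_one_nonneg _)
      (Finset.mem_univ c)
    try dsimp only at h2
    have h3 := Finset.single_le_sum
      (f := fun b' : V n => ∑ c' : V n, ∑ x' : V n,
        if T F b' c' x' = 0 ∧ ¬(b' = 0 ∨ c' = 0 ∨ b' = c') then (1 : ℤ) else 0)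
      (fun i _ => Finset.sum_nonneg fun j _ => Finset.sum_nonneg fun k _ => ite_one_nonneg _)
      (Finset.mem_univ b)
    try dsimp only at h3
    have h4 : (1 : ℤ) ≤ Np F := le_trans h1 (le_trans h2 h3)
    omega
  · intro h
    refine Finset.sum_eq_zero fun b _ => Finset.sum_eq_zero fun c _ =>
      Finset.sum_eq_zero fun x _ => if_neg ?_
    rintro ⟨hT, hdeg⟩
    push_neg at hdeg
    exact h b c x hdeg.1 hdeg.2.1 hdeg.2.2 hT

lemma key_of_apn (F : V n → V n) (h : IsAPN F) :
    ∀ b c x : V n, b ≠ 0 → c ≠ 0 → b ≠ c → T F b c x ≠ 0 := by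
  intro b c x hb hc hbc hT
  have hv := h b hb (F (x + b) + F x)
  have hsub : ({x, x + b, x + c} : Finset (V n))
      ⊆ Finset.univ.filter (fun y => F (y + b) + F y = F (x + b) + F x) := by
    intro y hy
    simp only [Finset.mem_insert, Finset.mem_singleton] at hy
    simp only [Finset.mem_filter, Finset.mem_univ, true_and]
    rcases hy with rfl | rfl | rfl
    · rfl
    · rw [addV_cancel, add_comm]
    · unfold T at hT
      have h4 : F (x + c + b) = F x + F (x + b) + F (x + c) := by
        have h5 : (F x + F (x + b) + F (x + c)) +
            ((F x + F (x + b) + F (x + c)) + F (x + c + b))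
            = (F x + F (x + b) + F (x + c)) + 0 := by rw [hT]
        rw [← add_assoc, addV_self, zero_add, add_zero] at h5
        exact h5
      rw [h4, addV_cancel, add_comm]
  have hxxb : x ≠ x + b := fun he => hb (left_eq_add.mp he)
  have hxxc : x ≠ x + c := fun he => hc (left_eq_add.mp he)
  have hxbxc : x + b ≠ x + c := fun he => hbc (add_left_cancel he)
  have hcard3 : ({x, x + b, x + c} : Finset (V n)).card = 3 := by
    rw [Finset.card_insert_of_notMem (by simp [hxxb, hxxc]),
      Finset.card_insert_of_notMem (by simp [hxbxc]), Finset.card_singleton]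
  have h32 := le_trans (Finset.card_le_card hsub) hv
  rw [hcard3] at h32
  omega

lemma apn_of_key (F : V n → V n)
    (h : ∀ b c x : V n, b ≠ 0 → c ≠ 0 → b ≠ c → T F b c x ≠ 0) : IsAPN F := by
  intro a ha v
  by_contra hle
  push_neg at hle
  set S := Finset.univ.filter (fun x => F (x + a) + F x = v) with hSdef
  have hcard : 3 ≤ S.card := hle
  obtain ⟨x, hx⟩ : S.Nonempty := Finset.card_pos.mp (by omega)
  have hxv : F (x + a) + F x = v := (Finset.mem_filter.mp hx).2
  have hxa : x + a ∈ S := by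
    simp only [hSdef, Finset.mem_filter, Finset.mem_univ, true_and]
    rw [addV_cancel, add_comm]
    exact hxv
  obtain ⟨z, hzS, hz⟩ : ∃ z ∈ S, z ∉ ({x, x + a} : Finset (V n)) := by
    by_contra hcon
    push_neg at hcon
    have hsub : S ⊆ ({x, x + a} : Finset (V n)) := fun y hy => hcon y hy
    have := Finset.card_le_card hsub
    have h2 : ({x, x + a} : Finset (V n)).card ≤ 2 :=
      le_trans (Finset.card_insert_le _ _) (by simp)
    omega
  simp only [Finset.mem_insert, Finset.mem_singleton, not_or] at hz
  obtain ⟨hzx, hzxa⟩ := hz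
  have hzv : F (z + a) + F z = v := (Finset.mem_filter.mp hzS).2
  have hxc : x + (x + z) = z := by rw [← add_assoc, addV_self, zero_add]
  have hc0 : x + z ≠ 0 := by
    intro h0
    apply hzx
    have h1 : x + (x + z) = x + 0 := by rw [h0]
    rw [hxc, add_zero] at h1
    exact h1
  have hca : a ≠ x + z := by
    intro hac
    apply hzxa
    rw [hac]
    exact hxc.symm
  refine h a (x + z) x ha hc0 hca ?_
  unfold T
  rw [hxc]
  have h1 : F x + F (x + a) = v := by rw [add_comm]; exact hxv
  have h2 : F z + F (z + a) = v := by rw [add_comm]; exact hzv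
  rw [add_assoc (F x + F (x + a)), h1, h2, addV_self]

end S19

theorem stmt19 (n : ℕ) (F : (Fin n → ZMod 2) → (Fin n → ZMod 2)) :
    (∑ lam ∈ Finset.univ.filter (fun lam : Fin n → ZMod 2 => lam ≠ 0),
        ∑ b : Fin n → ZMod 2, ∑ c : Fin n → ZMod 2,
          Fcal (DD b c (compF F lam))) ≥ 2 ^ (2 * n + 1) * ((2 : ℤ) ^ n - 1) ∧
    ((∑ lam ∈ Finset.univ.filter (fun lam : Fin n → ZMod 2 => lam ≠ 0),
        ∑ b : Fin n → ZMod 2, ∑ c : Fin n → ZMod 2,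
          Fcal (DD b c (compF F lam))) = 2 ^ (2 * n + 1) * ((2 : ℤ) ^ n - 1) ↔
      IsAPN F) := by
  have hm := S19.master F
  constructor
  · rw [hm]
    have := S19.np_nonneg F
    have h2 : (0 : ℤ) < 2 ^ n := by positivity
    nlinarith
  · rw [hm]
    constructor
    · intro he
      have h2 : (0 : ℤ) < 2 ^ n := by positivity
      have hnp : S19.Np F = 0 := by nlinarith [S19.np_nonneg F]
      exact S19.apn_of_key F ((S19.np_eq_zero_iff F).mp hnp)
    · intro hA
      have hnp : S19.Np F = 0 := (S19.np_eq_zero_iff F).mpr (S19.key_of_apn F hA)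
      rw [hnp]
      ring
end
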